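/- (Undamped D-LinOSS recovers LinOSS-IMEX.) For all real A ≥ 0 and Δt ∈ (0,1] with Δt²·A ≤ 4, the set of complex roots of the characteristic polynomial of M(A, 0, Δt) (i.e., the D-LinOSS recurrent matrix with damping G = 0) is exactly {λ^IMEX+(A,Δt), λ^IMEX−(A,Δt)}. -/
import Mathlib


open Polynomial

/-- The D-LinOSS per-component recurrent matrix. -/
noncomputable def Mrec (A G Δt : ℝ) : Matrix (Fin 2) (Fin 2) ℝ :=
  !![1 / (1 + Δt * G), -(Δt * A) / (1 + Δt * G);
     Δt / (1 + Δt * G), 1 - (Δt ^ 2 * A) / (1 + Δt * G)]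

/-- The LinOSS-IMEX per-component eigenvalues (`s = 1` for `+`, `s = -1` for `−`). -/
noncomputable def lamIMEX (A Δt : ℝ) (s : ℝ) : ℂ :=
  (((2 - Δt ^ 2 * A) / 2 : ℝ) : ℂ) +
    (s : ℂ) * (Complex.I / 2) * ((Real.sqrt (Δt ^ 2 * A * (4 - Δt ^ 2 * A)) : ℝ) : ℂ)

theorem undamped_dlinoss_is_linoss_imex (A Δt : ℝ) (hA : 0 ≤ A)
    (hΔt : Δt ∈ Set.Ioc (0 : ℝ) 1) (hbound : Δt ^ 2 * A ≤ 4) :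
    {lam : ℂ | Polynomial.aeval lam (Mrec A 0 Δt).charpoly = 0} =
      {lamIMEX A Δt 1, lamIMEX A Δt (-1)} := by
  have hsq : Real.sqrt (Δt ^ 2 * A * (4 - Δt ^ 2 * A)) ^ 2 = Δt ^ 2 * A * (4 - Δt ^ 2 * A) :=
    Real.sq_sqrt (mul_nonneg (mul_nonneg (sq_nonneg Δt) hA) (by linarith))
  have hcp : (Mrec A 0 Δt).charpoly = X ^ 2 - C (2 - Δt ^ 2 * A) * X + C 1 := by
    rw [Matrix.charpoly, Matrix.det_fin_two]
    simp only [Matrix.charmatrix_apply_eq,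
      Matrix.charmatrix_apply_ne _ _ _ (by decide : (0:Fin 2) ≠ 1),
      Matrix.charmatrix_apply_ne _ _ _ (by decide : (1:Fin 2) ≠ 0), Mrec]
    norm_num
    ring_nf
    simp only [map_sub, map_mul, map_pow, map_one, map_ofNat]
    ring
  have h4 : ((Real.sqrt (Δt ^ 2 * A * (4 - Δt ^ 2 * A)) : ℝ) : ℂ) ^ 2
      = (Δt : ℂ) ^ 2 * (A : ℂ) * (4 - (Δt : ℂ) ^ 2 * (A : ℂ)) := by
    have := congrArg Complex.ofReal hsq
    push_cast at this
    exact this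
  have key : ((2 : ℂ) - (Δt : ℂ) ^ 2 * (A : ℂ)) = lamIMEX A Δt 1 + lamIMEX A Δt (-1) := by
    simp only [lamIMEX]; push_cast; ring
  have key2 : lamIMEX A Δt 1 * lamIMEX A Δt (-1) = 1 := by
    simp only [lamIMEX]; push_cast
    linear_combination (1/4 : ℂ) * h4
      - (((Real.sqrt (Δt ^ 2 * A * (4 - Δt ^ 2 * A)) : ℝ) : ℂ) ^ 2 / 4) * Complex.I_sq
  ext lam
  simp only [Set.mem_setOf_eq, hcp, Set.mem_insert_iff, Set.mem_singleton_iff, map_add, map_sub,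
    map_mul, map_pow, aeval_X, aeval_C, map_one, Complex.coe_algebraMap, Complex.ofReal_ofNat]
  constructor
  · intro h
    have hf : (lam - lamIMEX A Δt 1) * (lam - lamIMEX A Δt (-1)) = 0 := by
      linear_combination h + lam * key + key2
    rcases mul_eq_zero.1 hf with h1 | h1
    · exact Or.inl (sub_eq_zero.1 h1)
    · exact Or.inr (sub_eq_zero.1 h1)
  · rintro (rfl | rfl)
    · linear_combination -lamIMEX A Δt 1 * key - key2
    · linear_combination -lamIMEX A Δt (-1) * key - key2
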